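/- Let K be a finite simplicial complex on V and let (α, β) be a bistellar pair of type h in K (viewed as n-dimensional). Then the number of n-dimensional faces changes by exactly n − 2h: f_n(bm_α K) + (h + 1) = f_n(K) + (n − h + 1). -/

import Mathlib

open Finset

variable {V : Type*} [DecidableEq V]

/-- An abstract simplicial complex: a set of finsets closed under taking subsets. -/
def IsSimplicialComplex (K : Set (Finset V)) : Prop :=
  ∀ S ∈ K, ∀ T ⊆ S, T ∈ K

/-- The boundary complex `∂s` of a finset `s`: all proper subsets of `s`. -/
def bdry (s : Finset V) : Set (Finset V) := {T | T ⊂ s}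

/-- The join `α * ∂β = {γ ∪ δ : γ ⊆ α, δ ⊊ β}` (this is `Λ_α`). -/
def joinSB (α β : Finset V) : Set (Finset V) :=
  {S | ∃ γ δ : Finset V, γ ⊆ α ∧ δ ⊂ β ∧ S = γ ∪ δ}

/-- The join `∂α * β = {γ ∪ δ : γ ⊊ α, δ ⊆ β}` (this is `Λ_β`). -/
def joinBS (α β : Finset V) : Set (Finset V) :=
  {S | ∃ γ δ : Finset V, γ ⊂ α ∧ δ ⊆ β ∧ S = γ ∪ δ}

/-- The link of a face `α` in `K`. -/
def linkOf (K : Set (Finset V)) (α : Finset V) : Set (Finset V) :=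
  {γ | γ ∩ α = ∅ ∧ γ ∪ α ∈ K}

/-- `(α, β)` is a bistellar pair of type `h` in `K`, viewed as `n`-dimensional. -/
def IsBistellarPair (K : Set (Finset V)) (n h : ℕ) (α β : Finset V) : Prop :=
  α ∈ K ∧ α.card = n - h + 1 ∧ β.card = h + 1 ∧ α ∩ β = ∅ ∧ β ∉ K ∧
    linkOf K α = bdry β

/-- The bistellar move `bm_α K = (K \ (α * ∂β)) ∪ (∂α * β)`. -/
def bm (K : Set (Finset V)) (α β : Finset V) : Set (Finset V) :=
  (K \ joinSB α β) ∪ joinBS α β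

/-- The `i`-th entry of the f-vector: the number of `i`-dimensional faces of `K`. -/
noncomputable def fvec (K : Set (Finset V)) (i : ℕ) : ℕ := {S ∈ K | S.card = i + 1}.ncard

/-- The set of `(n-1)`-dimensional faces of a complex `Λ` (members with `n` elements). -/
def faceSet (Λ : Set (Finset V)) (n : ℕ) : Set (Finset V) := {S ∈ Λ | S.card = n}

lemma joinBS_eq_joinSB (α β : Finset V) : joinBS α β = joinSB β α := by
  ext S
  constructor
  · rintro ⟨γ, δ, hγ, hδ, rfl⟩
    exact ⟨δ, γ, hδ, hγ, (union_comm γ δ)⟩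
  · rintro ⟨γ, δ, hγ, hδ, rfl⟩
    exact ⟨δ, γ, hδ, hγ, (union_comm γ δ)⟩

lemma top_joinSB (α β : Finset V) (p q : ℕ) (hα : α.card = p) (hβ : β.card = q + 1)
    (hd : Disjoint α β) :
    {S ∈ joinSB α β | S.card = p + q} = (fun δ => α ∪ δ) '' ↑(β.powersetCard q) := by
  ext S
  constructor
  · rintro ⟨⟨γ, δ, hγ, hδ, rfl⟩, hcard⟩
    have h1 : γ.card ≤ p := hα ▸ Finset.card_le_card hγ
    have h2 : δ.card < q + 1 := hβ ▸ Finset.card_lt_card hδ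
    have h3 : (γ ∪ δ).card ≤ γ.card + δ.card := Finset.card_union_le γ δ
    have hγc : γ.card = p := by omega
    have hδc : δ.card = q := by omega
    have hγα : γ = α := Finset.eq_of_subset_of_card_le hγ (by omega)
    refine ⟨δ, ?_, by rw [hγα]⟩
    simpa [Finset.mem_powersetCard] using ⟨hδ.subset, hδc⟩
  · rintro ⟨δ, hδ, rfl⟩
    simp only [Finset.mem_coe, Finset.mem_powersetCard] at hδ
    have hδβ : δ ⊂ β := by
      refine Finset.ssubset_iff_subset_ne.2 ⟨hδ.1, ?_⟩
      intro hcontra; rw [hcontra] at hδ; omega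
    have hdis : Disjoint α δ := hd.mono_right hδ.1
    refine ⟨⟨α, δ, subset_rfl, hδβ, rfl⟩, ?_⟩
    rw [Finset.card_union_of_disjoint hdis, hα, hδ.2]

lemma ncard_top_joinSB (α β : Finset V) (p q : ℕ) (hα : α.card = p) (hβ : β.card = q + 1)
    (hd : Disjoint α β) :
    {S ∈ joinSB α β | S.card = p + q}.ncard = β.card.choose q := by
  rw [top_joinSB α β p q hα hβ hd]
  rw [Set.ncard_image_of_injOn, Set.ncard_coe_finset, Finset.card_powersetCard]
  intro δ₁ h1 δ₂ h2 he
  simp only [Finset.mem_coe, Finset.mem_powersetCard] at h1 h2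
  have d1 : Disjoint α δ₁ := hd.mono_right h1.1
  have d2 : Disjoint α δ₂ := hd.mono_right h2.1
  have he' : α ∪ δ₁ = α ∪ δ₂ := he
  have : (α ∪ δ₁) \ α = (α ∪ δ₂) \ α := by rw [he']
  rwa [Finset.union_sdiff_cancel_left d1, Finset.union_sdiff_cancel_left d2] at this

/-- the number of `n`-dimensional faces changes by exactly `n - 2h`. -/
theorem fvec_top_change (K : Set (Finset V)) (hK : IsSimplicialComplex K)
    (hfin : K.Finite) (n h : ℕ) (hhn : h ≤ n) (α β : Finset V)
    (hpair : IsBistellarPair K n h α β) :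
    fvec (bm K α β) n + (h + 1) = fvec K n + (n - h + 1) := by
  obtain ⟨hαK, hαc, hβc, hαβ, hβK, hlink⟩ := hpair
  have hd : Disjoint α β := Finset.disjoint_iff_inter_eq_empty.2 hαβ
  set A : Set (Finset V) := {S ∈ K | S.card = n + 1} with hA
  set Jα : Set (Finset V) := {S ∈ joinSB α β | S.card = n + 1} with hJα
  set Jβ : Set (Finset V) := {S ∈ joinBS α β | S.card = n + 1} with hJβ
  -- cardinality of Jα
  have hnα : n + 1 = (n - h + 1) + h := by omega
  have hJαcard : Jα.ncard = h + 1 := by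
    rw [hJα, hnα, ncard_top_joinSB α β (n - h + 1) h hαc hβc hd, hβc,
      Nat.choose_succ_self_right]
  -- cardinality of Jβ
  have hnβ : n + 1 = (h + 1) + (n - h) := by omega
  have hαc' : α.card = (n - h) + 1 := hαc
  have hJβcard : Jβ.ncard = n - h + 1 := by
    rw [hJβ, joinBS_eq_joinSB, hnβ,
      ncard_top_joinSB β α (h + 1) (n - h) hβc hαc' hd.symm, hαc,
      Nat.choose_succ_self_right]
  -- Jβ elements contain β, hence are not in K
  have hJβK : ∀ S ∈ Jβ, S ∉ K := by
    rintro S ⟨⟨γ, δ, hγ, hδ, rfl⟩, hcard⟩ hSK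
    have h1 : γ.card < n - h + 1 := hαc ▸ Finset.card_lt_card hγ
    have h2 : δ.card ≤ h + 1 := hβc ▸ Finset.card_le_card hδ
    have h3 : (γ ∪ δ).card ≤ γ.card + δ.card := Finset.card_union_le γ δ
    have hδc : δ = β := Finset.eq_of_subset_of_card_le hδ (by omega)
    exact hβK (hK _ hSK β (hδc ▸ Finset.subset_union_right))
  -- Jα ⊆ A
  have hJαA : Jα ⊆ A := by
    rw [hJα, hnα, top_joinSB α β (n - h + 1) h hαc hβc hd]
    rintro S ⟨δ, hδ, rfl⟩
    simp only [Finset.mem_coe, Finset.mem_powersetCard] at hδ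
    have hδβ : δ ⊂ β := Finset.ssubset_iff_subset_ne.2 ⟨hδ.1, by
      intro hcontra; rw [hcontra] at hδ; omega⟩
    have : δ ∈ linkOf K α := hlink ▸ hδβ
    have hmem : α ∪ δ ∈ K := by rw [union_comm]; exact this.2
    refine ⟨hmem, ?_⟩
    rw [Finset.card_union_of_disjoint (hd.mono_right hδ.1), hαc, hδ.2]
    omega
  -- faces of bm
  have hT : {S ∈ bm K α β | S.card = n + 1} = (A \ Jα) ∪ Jβ := by
    ext S
    simp only [bm, Set.mem_union, Set.mem_diff, Set.mem_setOf_eq, hA, hJα, hJβ]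
    tauto
  -- finiteness
  have hAfin : A.Finite := hfin.subset (fun S hS => hS.1)
  have hJβfin : Jβ.Finite := by
    rw [hJβ, joinBS_eq_joinSB, hnβ, top_joinSB β α (h + 1) (n - h) hβc hαc' hd.symm]
    exact ((α.powersetCard (n - h)).finite_toSet).image _
  have hdisj : Disjoint (A \ Jα) Jβ := by
    rw [Set.disjoint_left]
    rintro S ⟨hSA, -⟩ hSJβ
    exact hJβK S hSJβ hSA.1
  have hcount : fvec (bm K α β) n = (A \ Jα).ncard + Jβ.ncard := by
    rw [fvec, hT, Set.ncard_union_eq hdisj hAfin.diff hJβfin]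
  have hdiff : (A \ Jα).ncard = A.ncard - Jα.ncard := Set.ncard_diff hJαA (hAfin.subset hJαA)
  have hle : Jα.ncard ≤ A.ncard := Set.ncard_le_ncard hJαA hAfin
  have hfK : fvec K n = A.ncard := rfl
  omega
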